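/- Let f(z) = ∑_{n≥0} a_n z^n be in the class K with radius of convergence R > 0, regarded as a holomorphic function on the complex disk {|z| < R}. If f(t e^{iθ}) = 0 for some t ∈ (0,R) and some θ ∈ [−π, π], then |θ| · σ_f(t) ≥ π/2. Consequently, f does not vanish in the region { t e^{iθ} : 0 ≤ t < R, |θ| < π/(2σ_f(t)) }. -/

import Mathlib

open Filter Topology MeasureTheory
open scoped ENNReal NNReal Classical

noncomputable section

/-- `psum a t = ∑ aₙ tⁿ`, the value `f(t)` of the power series with coefficients `a`. -/
def psum (a : ℕ → ℝ) (t : ℝ) : ℝ := ∑' n : ℕ, a n * t ^ n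

/-- The mean `m_f(t)` of the Khinchin family of the power series with coefficients `a`. -/
def meanK (a : ℕ → ℝ) (t : ℝ) : ℝ :=
  (∑' n : ℕ, (n : ℝ) * a n * t ^ n) / ∑' n : ℕ, a n * t ^ n

/-- The variance `σ_f²(t)` of the Khinchin family. -/
def varK (a : ℕ → ℝ) (t : ℝ) : ℝ :=
  (∑' n : ℕ, (n : ℝ) ^ 2 * a n * t ^ n) / (∑' n : ℕ, a n * t ^ n) - meanK a t ^ 2

/-- The standard deviation `σ_f(t)` of the Khinchin family. -/
def sdK (a : ℕ → ℝ) (t : ℝ) : ℝ := Real.sqrt (varK a t)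

/-- The moment `E(X_t^p)` of real exponent `p` of the Khinchin family. -/
def momK (a : ℕ → ℝ) (p : ℝ) (t : ℝ) : ℝ :=
  (∑' n : ℕ, (n : ℝ) ^ p * a n * t ^ n) / ∑' n : ℕ, a n * t ^ n

/-- The filter of `t ↑ R`: `atTop` when `R = ∞`, and `𝓝[<] R` when `R < ∞`. -/
def nhdsUpto (R : ℝ≥0∞) : Filter ℝ :=
  if R = ⊤ then atTop else nhdsWithin R.toReal (Set.Iio R.toReal)

/-- The power series `f` evaluated at a complex argument. -/
def Fc (a : ℕ → ℝ) (z : ℂ) : ℂ := ∑' n : ℕ, (a n : ℂ) * z ^ n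

/-- Key inequality: `cos x ≥ π/4 − x²/π`, with equality (tangency) at `x = ±π/2`. -/
lemma cos_key (x : ℝ) : Real.pi / 4 - x ^ 2 / Real.pi ≤ Real.cos x := by
  have hπ : (0:ℝ) < Real.pi := Real.pi_pos
  set F : ℝ → ℝ := fun y => Real.cos y - Real.pi / 4 + y ^ 2 / Real.pi with hF
  have hderiv : ∀ y : ℝ, HasDerivAt F (-Real.sin y + 2 * y / Real.pi) y := by
    intro y
    have h1 : HasDerivAt (fun y : ℝ => Real.cos y - Real.pi / 4) (-Real.sin y) y :=
      (Real.hasDerivAt_cos y).sub_const _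
    have h2 : HasDerivAt (fun y : ℝ => y ^ 2 / Real.pi) (2 * y / Real.pi) y := by
      have := (hasDerivAt_pow 2 y).div_const Real.pi
      simpa using this
    exact h1.add h2
  have hFd : Differentiable ℝ F := fun y => (hderiv y).differentiableAt
  have hderiv' : ∀ y, deriv F y = -Real.sin y + 2 * y / Real.pi := fun y => (hderiv y).deriv
  have hFval : F (Real.pi / 2) = 0 := by
    simp only [hF, Real.cos_pi_div_two]
    field_simp
    ring
  suffices h : ∀ y : ℝ, 0 ≤ y → 0 ≤ F y by
    rcases le_or_gt 0 x with hx | hx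
    · have := h x hx; simp only [hF] at this; linarith
    · have := h (-x) (by linarith)
      simp only [hF, Real.cos_neg, neg_sq] at this
      linarith
  intro y hy
  rcases le_or_gt y (Real.pi / 2) with hy2 | hy2
  · have hanti : AntitoneOn F (Set.Icc 0 (Real.pi / 2)) := by
      apply antitoneOn_of_deriv_nonpos (convex_Icc _ _) hFd.continuous.continuousOn
        hFd.differentiableOn
      intro z hz
      rw [interior_Icc] at hz
      rw [hderiv']
      have hs : 2 / Real.pi * z ≤ Real.sin z := Real.mul_le_sin hz.1.le hz.2.le
      have h2 : 2 * z / Real.pi = 2 / Real.pi * z := by ring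
      rw [h2]; linarith
    have := hanti (Set.mem_Icc.mpr ⟨hy, hy2⟩)
      (Set.mem_Icc.mpr ⟨by positivity, le_refl _⟩) hy2
    rw [hFval] at this; exact this
  · have hmono : MonotoneOn F (Set.Ici (Real.pi / 2)) := by
      apply monotoneOn_of_deriv_nonneg (convex_Ici _) hFd.continuous.continuousOn
        hFd.differentiableOn
      intro z hz
      rw [interior_Ici] at hz
      rw [hderiv']
      have h1 : Real.sin z ≤ 1 := Real.sin_le_one z
      have h2 : 1 ≤ 2 * z / Real.pi := by
        rw [le_div_iff₀ hπ]
        have := hz.out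
        linarith
      linarith
    have := hmono (Set.self_mem_Ici) (Set.mem_Ici.mpr hy2.le) hy2.le
    rw [hFval] at this; exact this

lemma summable_aux {a : ℕ → ℝ} {R : ℝ≥0∞}
    (hpos : ∀ n, 0 ≤ a n)
    (hconv : ∀ t : ℝ, 0 ≤ t → ENNReal.ofReal t < R → Summable fun n : ℕ => a n * t ^ n)
    {t : ℝ} (ht : 0 ≤ t) (htR : ENNReal.ofReal t < R) (k : ℕ) :
    Summable fun n : ℕ => (n : ℝ) ^ k * (a n * t ^ n) := by
  obtain ⟨s, hs0, hts, hsR⟩ := ENNReal.lt_iff_exists_real_btwn.mp htR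
  have hts' : t < s := by
    rwa [ENNReal.ofReal_lt_ofReal_iff_of_nonneg ht] at hts
  have hs : Summable fun n => a n * s ^ n := hconv s hs0 hsR
  have hspos : 0 < s := lt_of_le_of_lt ht hts'
  set r := t / s with hr
  have hr0 : 0 ≤ r := div_nonneg ht hspos.le
  have hr1 : r < 1 := (div_lt_one hspos).mpr hts'
  have hb : Summable (fun n : ℕ => (n : ℝ) ^ k * r ^ n) :=
    summable_pow_mul_geometric_of_norm_lt_one k
      (by rwa [Real.norm_eq_abs, abs_of_nonneg hr0])
  obtain ⟨C, hC⟩ := hb.tendsto_atTop_zero.bddAbove_range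
  have hts'' : t = r * s := by rw [hr, div_mul_cancel₀ _ hspos.ne']
  refine Summable.of_nonneg_of_le (fun n => mul_nonneg (pow_nonneg n.cast_nonneg k)
    (mul_nonneg (hpos n) (pow_nonneg ht n))) (fun n => ?_) (hs.mul_left C)
  calc (n : ℝ) ^ k * (a n * t ^ n) = ((n : ℝ) ^ k * r ^ n) * (a n * s ^ n) := by
        rw [hts'']; ring
    _ ≤ C * (a n * s ^ n) := by
        apply mul_le_mul_of_nonneg_right _ (mul_nonneg (hpos n) (pow_nonneg hs0 n))
        exact hC (Set.mem_range_self n)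

lemma core {a : ℕ → ℝ} {R : ℝ≥0∞}
    (hpos : ∀ n, 0 ≤ a n) (ha0 : 0 < a 0)
    (hconv : ∀ t : ℝ, 0 ≤ t → ENNReal.ofReal t < R → Summable fun n : ℕ => a n * t ^ n)
    {t : ℝ} (ht : 0 < t) (htR : ENNReal.ofReal t < R) (θ : ℝ)
    (hz : Fc a ((t : ℂ) * Complex.exp (Complex.I * (θ : ℂ))) = 0) :
    Real.pi / 2 ≤ |θ| * sdK a t := by
  have hπ : (0:ℝ) < Real.pi := Real.pi_pos
  have hS0 : Summable (fun n : ℕ => a n * t ^ n) := hconv t ht.le htR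
  have hS1 : Summable (fun n : ℕ => (n:ℝ) * (a n * t ^ n)) := by
    simpa using summable_aux hpos hconv ht.le htR 1
  have hS2 : Summable (fun n : ℕ => (n:ℝ)^2 * (a n * t ^ n)) :=
    summable_aux hpos hconv ht.le htR 2
  have hwnn : ∀ n : ℕ, 0 ≤ a n * t ^ n := fun n => mul_nonneg (hpos n) (pow_nonneg ht.le n)
  set S0 : ℝ := ∑' n : ℕ, a n * t ^ n with hS0d
  set S1 : ℝ := ∑' n : ℕ, (n:ℝ) * (a n * t ^ n) with hS1d
  set S2 : ℝ := ∑' n : ℕ, (n:ℝ)^2 * (a n * t ^ n) with hS2d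
  have hS0pos : 0 < S0 := Summable.tsum_pos hS0 hwnn 0 (by simpa using ha0)
  set m : ℝ := meanK a t with hm
  set z : ℂ := (t : ℂ) * Complex.exp (Complex.I * (θ : ℂ)) with hzd
  have hz' : ∑' n : ℕ, (a n : ℂ) * z ^ n = 0 := hz
  set c : ℂ := Complex.exp (-(Complex.I * ((m : ℂ) * (θ : ℂ)))) with hcd
  have h1 : ∑' n : ℕ, ((a n : ℂ) * z ^ n * c) = 0 := by
    rw [tsum_mul_right, hz', zero_mul]
  have hterm : ∀ n : ℕ, (a n : ℂ) * z ^ n * c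
      = ((a n * t ^ n : ℝ) : ℂ) * Complex.exp (((((n:ℝ) - m) * θ : ℝ)) * Complex.I) := by
    intro n
    have e1 : Complex.exp ((n:ℂ) * (Complex.I * (θ:ℂ))) *
        Complex.exp (-(Complex.I * ((m : ℂ) * (θ : ℂ))))
        = Complex.exp (((((n:ℝ) - m) * θ : ℝ)) * Complex.I) := by
      rw [← Complex.exp_add]; congr 1; push_cast; ring
    calc (a n : ℂ) * z ^ n * c
        = ((a n * t ^ n : ℝ) : ℂ) * (Complex.exp ((n:ℂ) * (Complex.I * (θ:ℂ))) *
          Complex.exp (-(Complex.I * ((m : ℂ) * (θ : ℂ))))) := by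
          rw [hzd, hcd, mul_pow, ← Complex.exp_nat_mul]; push_cast; ring
      _ = _ := by rw [e1]
  have hnorm : ∀ n : ℕ, ‖((a n * t ^ n : ℝ) : ℂ) *
      Complex.exp (((((n:ℝ) - m) * θ : ℝ)) * Complex.I)‖ = a n * t ^ n := by
    intro n
    rw [norm_mul, Complex.norm_real, Complex.norm_exp_ofReal_mul_I, mul_one,
      Real.norm_eq_abs, abs_of_nonneg (hwnn n)]
  have hgsum : Summable (fun n : ℕ => ((a n * t ^ n : ℝ) : ℂ) *
      Complex.exp (((((n:ℝ) - m) * θ : ℝ)) * Complex.I)) := by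
    apply Summable.of_norm
    exact hS0.congr (fun n => (hnorm n).symm)
  have h2 : ∑' n : ℕ, (((a n * t ^ n : ℝ) : ℂ) *
      Complex.exp (((((n:ℝ) - m) * θ : ℝ)) * Complex.I)) = 0 :=
    (tsum_congr hterm).symm.trans h1
  have h3 := Complex.re_tsum hgsum
  rw [h2, Complex.zero_re] at h3
  have hre : ∑' n : ℕ, (a n * t ^ n) * Real.cos (((n:ℝ) - m) * θ) = 0 := by
    calc ∑' n : ℕ, (a n * t ^ n) * Real.cos (((n:ℝ) - m) * θ)
        = ∑' n : ℕ, (((a n * t ^ n : ℝ) : ℂ) *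
          Complex.exp (((((n:ℝ) - m) * θ : ℝ)) * Complex.I)).re :=
          tsum_congr (fun n => by
            rw [Complex.re_ofReal_mul, Complex.exp_ofReal_mul_I_re])
      _ = 0 := h3.symm
  have hq : Summable (fun n : ℕ => ((n:ℝ) - m)^2 * (a n * t ^ n)) := by
    have he : (fun n : ℕ => ((n:ℝ) - m)^2 * (a n * t ^ n))
        = fun n : ℕ => ((n:ℝ)^2 * (a n * t ^ n) - (2*m) * ((n:ℝ) * (a n * t ^ n)))
          + m^2 * (a n * t ^ n) := by
      funext n; ring
    rw [he]
    exact (hS2.sub (hS1.mul_left (2*m))).add (hS0.mul_left (m^2))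
  have hL : Summable (fun n : ℕ => (Real.pi/4) * (a n * t ^ n)
      - (θ^2/Real.pi) * (((n:ℝ) - m)^2 * (a n * t ^ n))) :=
    (hS0.mul_left _).sub (hq.mul_left _)
  have hRS : Summable (fun n : ℕ => (a n * t ^ n) * Real.cos (((n:ℝ) - m) * θ)) := by
    apply Summable.of_norm_bounded hS0
    intro n
    rw [Real.norm_eq_abs, abs_mul, abs_of_nonneg (hwnn n)]
    calc (a n * t ^ n) * |Real.cos (((n:ℝ) - m) * θ)| ≤ (a n * t ^ n) * 1 :=
        mul_le_mul_of_nonneg_left (Real.abs_cos_le_one _) (hwnn n)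
      _ = a n * t ^ n := mul_one _
  have hptwise : ∀ n : ℕ, (Real.pi/4) * (a n * t ^ n)
      - (θ^2/Real.pi) * (((n:ℝ) - m)^2 * (a n * t ^ n))
      ≤ (a n * t ^ n) * Real.cos (((n:ℝ) - m) * θ) := by
    intro n
    have h4 := mul_le_mul_of_nonneg_left (cos_key (((n:ℝ) - m) * θ)) (hwnn n)
    calc (Real.pi/4) * (a n * t ^ n) - (θ^2/Real.pi) * (((n:ℝ) - m)^2 * (a n * t ^ n))
        = (a n * t ^ n) * (Real.pi / 4 - (((n:ℝ) - m) * θ) ^ 2 / Real.pi) := by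
          field_simp
      _ ≤ (a n * t ^ n) * Real.cos (((n:ℝ) - m) * θ) := h4
  set Q : ℝ := ∑' n : ℕ, ((n:ℝ) - m)^2 * (a n * t ^ n) with hQd
  have hmain : (Real.pi/4) * S0 - (θ^2/Real.pi) * Q ≤ 0 := by
    have h5 := Summable.tsum_le_tsum hptwise hL hRS
    rw [hre] at h5
    rw [Summable.tsum_sub (hS0.mul_left _) (hq.mul_left _), tsum_mul_left, tsum_mul_left] at h5
    exact h5
  have hQ : Q = S2 - 2*m*S1 + m^2 * S0 := by
    rw [hQd]
    rw [show (fun n : ℕ => ((n:ℝ) - m)^2 * (a n * t ^ n))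
        = fun n : ℕ => ((n:ℝ)^2 * (a n * t ^ n) - (2*m) * ((n:ℝ) * (a n * t ^ n)))
          + m^2 * (a n * t ^ n) from funext (fun n => by ring)]
    rw [Summable.tsum_add (hS2.sub (hS1.mul_left _)) (hS0.mul_left _),
      Summable.tsum_sub hS2 (hS1.mul_left _), tsum_mul_left, tsum_mul_left]
  have hva : varK a t = S2 / S0 - m^2 := by
    have hnum : (∑' n : ℕ, (n : ℝ) ^ 2 * a n * t ^ n) = S2 :=
      tsum_congr (fun n => mul_assoc _ _ _)
    rw [varK, hnum, ← hS0d, ← hm]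
  have hmval : m = S1 / S0 := by
    have hnum : (∑' n : ℕ, (n : ℝ) * a n * t ^ n) = S1 :=
      tsum_congr (fun n => mul_assoc _ _ _)
    rw [hm, meanK, hnum, ← hS0d]
  have hQv : Q = S0 * varK a t := by
    rw [hva, hQ, hmval]
    field_simp
    ring
  have hmain' : (Real.pi/4) * S0 ≤ (θ^2/Real.pi) * (S0 * varK a t) := by
    rw [← hQv]; linarith
  have hP : Real.pi^2/4 ≤ θ^2 * varK a t := by
    have h5 : (Real.pi^2/4) * S0 ≤ (θ^2 * varK a t) * S0 := by
      have h6 := mul_le_mul_of_nonneg_right hmain' hπ.le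
      calc (Real.pi^2/4) * S0 = ((Real.pi/4) * S0) * Real.pi := by ring
        _ ≤ ((θ^2/Real.pi) * (S0 * varK a t)) * Real.pi := h6
        _ = (θ^2 * varK a t) * S0 := by field_simp
    exact le_of_mul_le_mul_right h5 hS0pos
  have hv0 : 0 ≤ varK a t := by
    by_contra h
    push_neg at h
    have h7 : θ^2 * varK a t ≤ 0 := mul_nonpos_of_nonneg_of_nonpos (sq_nonneg θ) h.le
    nlinarith [mul_pos hπ hπ]
  rw [sdK]
  rw [show Real.pi/2 = Real.sqrt ((Real.pi/2)^2) from (Real.sqrt_sq (by positivity)).symm]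
  rw [← Real.sqrt_sq_eq_abs, ← Real.sqrt_mul (sq_nonneg θ)]
  apply Real.sqrt_le_sqrt
  calc (Real.pi/2)^2 = Real.pi^2/4 := by ring
    _ ≤ θ^2 * varK a t := hP

/-- Proposition 1.3.5. For `f ∈ K` with radius of convergence `R > 0`:
if `f(t e^{iθ}) = 0` with `t ∈ (0,R)` and `θ ∈ [-π,π]` then `|θ| σ_f(t) ≥ π/2`; consequently
`f` does not vanish on the region `{ t e^{iθ} : 0 ≤ t < R, |θ| < π/(2σ_f(t)) }`. -/
theorem statement4 (a : ℕ → ℝ) (R : ℝ≥0∞) (hR : 0 < R)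
    (hpos : ∀ n, 0 ≤ a n) (ha0 : 0 < a 0) (ha1 : ∃ n, 1 ≤ n ∧ 0 < a n)
    (hconv : ∀ t : ℝ, 0 ≤ t → ENNReal.ofReal t < R → Summable fun n => a n * t ^ n)
    (hdiv : ∀ t : ℝ, R < ENNReal.ofReal t → ¬ Summable fun n => a n * t ^ n) :
    (∀ t θ : ℝ, 0 < t → ENNReal.ofReal t < R → θ ∈ Set.Icc (-Real.pi) Real.pi →
        Fc a ((t : ℂ) * Complex.exp (Complex.I * (θ : ℂ))) = 0 →
        Real.pi / 2 ≤ |θ| * sdK a t) ∧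
    (∀ t θ : ℝ, 0 ≤ t → ENNReal.ofReal t < R → |θ| < Real.pi / (2 * sdK a t) →
        Fc a ((t : ℂ) * Complex.exp (Complex.I * (θ : ℂ))) ≠ 0) := by
  constructor
  · intro t θ ht htR _ hz
    exact core hpos ha0 hconv ht htR θ hz
  · intro t θ ht htR hθ hz
    rcases ht.eq_or_lt with h0 | h0
    · have hz0 : ((t : ℂ) * Complex.exp (Complex.I * (θ : ℂ))) = 0 := by
        rw [← h0]; simp
      rw [hz0] at hz
      have hFc0 : Fc a 0 = (a 0 : ℂ) := by
        rw [Fc, tsum_eq_single 0 (fun n hn => by simp [zero_pow hn])]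
        simp
      rw [hFc0] at hz
      exact (Complex.ofReal_ne_zero.mpr ha0.ne') hz
    · have hc := core hpos ha0 hconv h0 htR θ hz
      have hsd : 0 ≤ sdK a t := Real.sqrt_nonneg _
      rcases hsd.eq_or_lt with hs0 | hs0
      · rw [← hs0, mul_zero, div_zero] at hθ
        exact absurd hθ (not_lt.mpr (abs_nonneg θ))
      · have h6 := (lt_div_iff₀ (by positivity)).mp hθ
        have h7 : |θ| * (2 * sdK a t) = 2 * (|θ| * sdK a t) := by ring
        rw [h7] at h6
        linarith
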